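/- If G is a hypergraph in which every pair of distinct edges shares at most the vertices forced by acyclicity (Berge-acyclic), and φ_G = ⊗_e φ_e, ψ_G = ⊗_e ψ_e are entanglement structures with all φ_e concise, then a restriction φ_G ≥ ψ_G exists if and only if φ_e ≥ ψ_e for every edge e. (It suffices to prove the special case: G has two edges sharing exactly one vertex.) -/

import Mathlib

open TensorProduct

section

variable {V U : Type*} [AddCommGroup V] [Module ℂ V] [AddCommGroup U] [Module ℂ U]

/-- Contraction of `φ ∈ V ⊗ U` with a functional on `U`. -/
noncomputable def ctrRight (φ : V ⊗[ℂ] U) (f : Module.Dual ℂ U) : V :=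
  TensorProduct.rid ℂ V ((LinearMap.lTensor V f) φ)

/-- Contraction of `φ ∈ V ⊗ U` with a functional on `V`. -/
noncomputable def ctrLeft (φ : V ⊗[ℂ] U) (f : Module.Dual ℂ V) : U :=
  TensorProduct.lid ℂ U ((LinearMap.rTensor U f) φ)

/-- `φ ∈ V ⊗ U` is concise: both single-party contraction spaces are full. -/
def Concise (φ : V ⊗[ℂ] U) : Prop :=
  Submodule.span ℂ (Set.range fun f : Module.Dual ℂ U => ctrRight φ f) = ⊤ ∧
  Submodule.span ℂ (Set.range fun f : Module.Dual ℂ V => ctrLeft φ f) = ⊤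

@[simp] lemma ctrRight_tmul (v : V) (u : U) (f : Module.Dual ℂ U) :
    ctrRight (v ⊗ₜ[ℂ] u) f = f u • v := by
  simp [ctrRight]

@[simp] lemma ctrLeft_tmul (v : V) (u : U) (f : Module.Dual ℂ V) :
    ctrLeft (v ⊗ₜ[ℂ] u) f = f v • u := by
  simp [ctrLeft]

@[simp] lemma ctrRight_zero (f : Module.Dual ℂ U) : ctrRight (0 : V ⊗[ℂ] U) f = 0 := by
  simp [ctrRight]

@[simp] lemma ctrLeft_zero (f : Module.Dual ℂ V) : ctrLeft (0 : V ⊗[ℂ] U) f = 0 := by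
  simp [ctrLeft]

@[simp] lemma ctrRight_add (x y : V ⊗[ℂ] U) (f : Module.Dual ℂ U) :
    ctrRight (x + y) f = ctrRight x f + ctrRight y f := by
  simp [ctrRight]

@[simp] lemma ctrLeft_add (x y : V ⊗[ℂ] U) (f : Module.Dual ℂ V) :
    ctrLeft (x + y) f = ctrLeft x f + ctrLeft y f := by
  simp [ctrLeft]

end

/-- Regrouping `(V₁⊗V₂)⊗(V₃⊗V₄) ≃ V₁⊗((V₂⊗V₃)⊗V₄)`: from the edge-wise grouping of
two edges sharing one middle vertex to the vertex-wise grouping. -/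
noncomputable def vertexRegroup (V₁ V₂ V₃ V₄ : Type*) [AddCommGroup V₁] [Module ℂ V₁]
    [AddCommGroup V₂] [Module ℂ V₂] [AddCommGroup V₃] [Module ℂ V₃]
    [AddCommGroup V₄] [Module ℂ V₄] :
    (V₁ ⊗[ℂ] V₂) ⊗[ℂ] (V₃ ⊗[ℂ] V₄) ≃ₗ[ℂ] V₁ ⊗[ℂ] ((V₂ ⊗[ℂ] V₃) ⊗[ℂ] V₄) :=
  (TensorProduct.assoc ℂ V₁ V₂ (V₃ ⊗[ℂ] V₄)).trans
    (TensorProduct.congr (LinearEquiv.refl ℂ V₁)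
      ((TensorProduct.assoc ℂ V₂ V₃ V₄).symm))

section auxpair
variable {A B : Type*} [AddCommGroup A] [Module ℂ A] [AddCommGroup B] [Module ℂ B]

/-- Evaluation of a product functional `f ⊗ g` on `A ⊗ B`. -/
noncomputable def pairTensor (f : Module.Dual ℂ A) (g : Module.Dual ℂ B) :
    A ⊗[ℂ] B →ₗ[ℂ] ℂ :=
  (TensorProduct.lid ℂ ℂ).toLinearMap ∘ₗ TensorProduct.map f g

@[simp] lemma pairTensor_tmul (f : Module.Dual ℂ A) (g : Module.Dual ℂ B) (a : A) (b : B) :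
    pairTensor f g (a ⊗ₜ[ℂ] b) = f a * g b := by
  simp [pairTensor, smul_eq_mul]

/-- Product functionals separate points of a tensor product of vector spaces. -/
lemma exists_pair_ne_zero {x : A ⊗[ℂ] B} (hx : x ≠ 0) :
    ∃ f g, pairTensor f g x ≠ 0 := by
  classical
  let b := Module.Basis.ofVectorSpace ℂ A
  let c := Module.Basis.ofVectorSpace ℂ B
  let bc := b.tensorProduct c
  have h : bc.repr x ≠ 0 := by
    simpa using (bc.repr.map_ne_zero_iff).mpr hx
  obtain ⟨⟨i, k⟩, hik⟩ : ∃ p, bc.repr x p ≠ 0 := by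
    by_contra hcon
    push_neg at hcon
    exact h (Finsupp.ext hcon)
  refine ⟨b.coord i, c.coord k, ?_⟩
  have key : pairTensor (b.coord i) (c.coord k) = bc.coord (i, k) := by
    apply bc.ext
    rintro ⟨j, l⟩
    have hb : bc (j, l) = b j ⊗ₜ[ℂ] c l := Module.Basis.tensorProduct_apply b c j l
    rw [hb]
    simp [Module.Basis.coord_apply, Finsupp.single_apply, Prod.ext_iff, bc,
      mul_ite, ite_mul, and_comm]
    split_ifs <;> rfl
  rw [key]
  simpa [Module.Basis.coord_apply] using hik

end auxpair

@[simp] lemma vertexRegroup_tmul {V₁ V₂ V₃ V₄ : Type*} [AddCommGroup V₁] [Module ℂ V₁]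
    [AddCommGroup V₂] [Module ℂ V₂] [AddCommGroup V₃] [Module ℂ V₃]
    [AddCommGroup V₄] [Module ℂ V₄] (a : V₁) (b : V₂) (c : V₃) (d : V₄) :
    vertexRegroup V₁ V₂ V₃ V₄ ((a ⊗ₜ[ℂ] b) ⊗ₜ[ℂ] (c ⊗ₜ[ℂ] d)) =
      a ⊗ₜ[ℂ] ((b ⊗ₜ[ℂ] c) ⊗ₜ[ℂ] d) := by
  simp [vertexRegroup]

section collapse

variable {V₁ V₂ V₃ V₄ W₁ W₂ W₃ W₄ : Type*}
    [AddCommGroup V₁] [Module ℂ V₁] [AddCommGroup V₂] [Module ℂ V₂]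
    [AddCommGroup V₃] [Module ℂ V₃] [AddCommGroup V₄] [Module ℂ V₄]
    [AddCommGroup W₁] [Module ℂ W₁] [AddCommGroup W₂] [Module ℂ W₂]
    [AddCommGroup W₃] [Module ℂ W₃] [AddCommGroup W₄] [Module ℂ W₄]

/-- Contract the third leg of `(W₂ ⊗ W₃)` with a functional. -/
noncomputable def ctrT (f₃ : Module.Dual ℂ W₃) : W₂ ⊗[ℂ] W₃ →ₗ[ℂ] W₂ :=
  (TensorProduct.rid ℂ W₂).toLinearMap ∘ₗ LinearMap.lTensor W₂ f₃

@[simp] lemma ctrT_tmul (f₃ : Module.Dual ℂ W₃) (b : W₂) (c : W₃) :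
    ctrT f₃ (b ⊗ₜ[ℂ] c) = f₃ c • b := by
  simp [ctrT]

/-- Contract the second leg of `(W₂ ⊗ W₃)` with a functional. -/
noncomputable def ctrS (f₂ : Module.Dual ℂ W₂) : W₂ ⊗[ℂ] W₃ →ₗ[ℂ] W₃ :=
  (TensorProduct.lid ℂ W₃).toLinearMap ∘ₗ LinearMap.rTensor W₃ f₂

@[simp] lemma ctrS_tmul (f₂ : Module.Dual ℂ W₂) (b : W₂) (c : W₃) :
    ctrS f₂ (b ⊗ₜ[ℂ] c) = f₂ b • c := by
  simp [ctrS]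

/-- Collapse the `W₃` and `W₄` legs of `W₁ ⊗ ((W₂ ⊗ W₃) ⊗ W₄)`. -/
noncomputable def collapseR (f₃ : Module.Dual ℂ W₃) (f₄ : Module.Dual ℂ W₄) :
    W₁ ⊗[ℂ] ((W₂ ⊗[ℂ] W₃) ⊗[ℂ] W₄) →ₗ[ℂ] W₁ ⊗[ℂ] W₂ :=
  TensorProduct.map LinearMap.id
    ((TensorProduct.rid ℂ W₂).toLinearMap ∘ₗ TensorProduct.map (ctrT f₃) f₄)

@[simp] lemma collapseR_tmul (f₃ : Module.Dual ℂ W₃) (f₄ : Module.Dual ℂ W₄)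
    (a : W₁) (b : W₂) (c : W₃) (d : W₄) :
    collapseR f₃ f₄ (a ⊗ₜ[ℂ] ((b ⊗ₜ[ℂ] c) ⊗ₜ[ℂ] d)) =
      (f₃ c * f₄ d) • (a ⊗ₜ[ℂ] b) := by
  simp [collapseR, tmul_smul, smul_smul, mul_comm]

/-- Collapse the `W₁` and `W₂` legs of `W₁ ⊗ ((W₂ ⊗ W₃) ⊗ W₄)`. -/
noncomputable def collapseL (f₁ : Module.Dual ℂ W₁) (f₂ : Module.Dual ℂ W₂) :
    W₁ ⊗[ℂ] ((W₂ ⊗[ℂ] W₃) ⊗[ℂ] W₄) →ₗ[ℂ] W₃ ⊗[ℂ] W₄ :=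
  (TensorProduct.lid ℂ (W₃ ⊗[ℂ] W₄)).toLinearMap ∘ₗ
    TensorProduct.map f₁ (TensorProduct.map (ctrS f₂) LinearMap.id)

@[simp] lemma collapseL_tmul (f₁ : Module.Dual ℂ W₁) (f₂ : Module.Dual ℂ W₂)
    (a : W₁) (b : W₂) (c : W₃) (d : W₄) :
    collapseL f₁ f₂ (a ⊗ₜ[ℂ] ((b ⊗ₜ[ℂ] c) ⊗ₜ[ℂ] d)) =
      (f₁ a * f₂ b) • (c ⊗ₜ[ℂ] d) := by
  simp [collapseL, smul_tmul', smul_smul]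

lemma collapseR_regroup (f₃ : Module.Dual ℂ W₃) (f₄ : Module.Dual ℂ W₄)
    (x : W₁ ⊗[ℂ] W₂) (y : W₃ ⊗[ℂ] W₄) :
    collapseR f₃ f₄ (vertexRegroup W₁ W₂ W₃ W₄ (x ⊗ₜ[ℂ] y)) =
      pairTensor f₃ f₄ y • x := by
  induction x using TensorProduct.induction_on with
  | zero => simp
  | tmul a b =>
    induction y using TensorProduct.induction_on with
    | zero => simp
    | tmul c d => simp
    | add y₁ y₂ h₁ h₂ => simp [tmul_add, h₁, h₂, add_smul]
  | add x₁ x₂ h₁ h₂ => simp [add_tmul, h₁, h₂, smul_add]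

lemma collapseL_regroup (f₁ : Module.Dual ℂ W₁) (f₂ : Module.Dual ℂ W₂)
    (x : W₁ ⊗[ℂ] W₂) (y : W₃ ⊗[ℂ] W₄) :
    collapseL f₁ f₂ (vertexRegroup W₁ W₂ W₃ W₄ (x ⊗ₜ[ℂ] y)) =
      pairTensor f₁ f₂ x • y := by
  induction x using TensorProduct.induction_on with
  | zero => simp
  | tmul a b =>
    induction y using TensorProduct.induction_on with
    | zero => simp
    | tmul c d => simp
    | add y₁ y₂ h₁ h₂ => simp [tmul_add, h₁, h₂, smul_add]
  | add x₁ x₂ h₁ h₂ => simp [add_tmul, h₁, h₂, add_smul]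

lemma collapseR_maps (f₃ : Module.Dual ℂ W₃) (f₄ : Module.Dual ℂ W₄)
    (Mu : V₁ →ₗ[ℂ] W₁) (Mv : V₂ ⊗[ℂ] V₃ →ₗ[ℂ] W₂ ⊗[ℂ] W₃) (Mw : V₄ →ₗ[ℂ] W₄)
    (x : V₁ ⊗[ℂ] V₂) (y : V₃ ⊗[ℂ] V₄) :
    collapseR f₃ f₄ (TensorProduct.map Mu (TensorProduct.map Mv Mw)
        (vertexRegroup V₁ V₂ V₃ V₄ (x ⊗ₜ[ℂ] y))) =
      TensorProduct.map Mu
        (ctrT f₃ ∘ₗ Mv ∘ₗ (TensorProduct.mk ℂ V₂ V₃).flip (ctrRight y (f₄ ∘ₗ Mw))) x := by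
  induction x using TensorProduct.induction_on with
  | zero => simp
  | tmul a b =>
    induction y using TensorProduct.induction_on with
    | zero => simp [TensorProduct.map_zero_right]
    | tmul c d => simp [collapseR, tmul_smul, smul_smul, mul_comm]
    | add y₁ y₂ h₁ h₂ =>
      simp only [tmul_add, map_add, h₁, h₂, ctrRight_add, LinearMap.comp_add,
        LinearMap.add_comp, TensorProduct.map_add_right, LinearMap.add_apply]
  | add x₁ x₂ h₁ h₂ => simp [add_tmul, h₁, h₂]

lemma collapseL_maps (f₁ : Module.Dual ℂ W₁) (f₂ : Module.Dual ℂ W₂)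
    (Mu : V₁ →ₗ[ℂ] W₁) (Mv : V₂ ⊗[ℂ] V₃ →ₗ[ℂ] W₂ ⊗[ℂ] W₃) (Mw : V₄ →ₗ[ℂ] W₄)
    (x : V₁ ⊗[ℂ] V₂) (y : V₃ ⊗[ℂ] V₄) :
    collapseL f₁ f₂ (TensorProduct.map Mu (TensorProduct.map Mv Mw)
        (vertexRegroup V₁ V₂ V₃ V₄ (x ⊗ₜ[ℂ] y))) =
      TensorProduct.map
        (ctrS f₂ ∘ₗ Mv ∘ₗ TensorProduct.mk ℂ V₂ V₃ (ctrLeft x (f₁ ∘ₗ Mu))) Mw y := by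
  induction y using TensorProduct.induction_on with
  | zero => simp
  | tmul c d =>
    induction x using TensorProduct.induction_on with
    | zero => simp [TensorProduct.map_zero_left]
    | tmul a b =>
      simp only [vertexRegroup_tmul, TensorProduct.map_tmul, collapseL, TensorProduct.mk_apply,
        ctrLeft_tmul, LinearMap.coe_comp, LinearEquiv.coe_coe, Function.comp_apply,
        TensorProduct.lid_tmul, LinearMap.id_coe, id_eq, TensorProduct.smul_tmul']
      congr 1
      rw [← map_smul, ← map_smul, TensorProduct.smul_tmul']
    | add x₁ x₂ h₁ h₂ =>
      simp only [add_tmul, map_add, h₁, h₂, ctrLeft_add, map_add, LinearMap.comp_add,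
        LinearMap.add_comp, TensorProduct.map_add_left, LinearMap.add_apply]
  | add y₁ y₂ h₁ h₂ => simp [tmul_add, h₁, h₂]

lemma regroup_natural (N₁ : V₁ →ₗ[ℂ] W₁) (N₂ : V₂ →ₗ[ℂ] W₂)
    (N₃ : V₃ →ₗ[ℂ] W₃) (N₄ : V₄ →ₗ[ℂ] W₄) (x : V₁ ⊗[ℂ] V₂) (y : V₃ ⊗[ℂ] V₄) :
    TensorProduct.map N₁ (TensorProduct.map (TensorProduct.map N₂ N₃) N₄)
        (vertexRegroup V₁ V₂ V₃ V₄ (x ⊗ₜ[ℂ] y)) =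
      vertexRegroup W₁ W₂ W₃ W₄
        ((TensorProduct.map N₁ N₂ x) ⊗ₜ[ℂ] (TensorProduct.map N₃ N₄ y)) := by
  induction x using TensorProduct.induction_on with
  | zero => simp
  | tmul a b =>
    induction y using TensorProduct.induction_on with
    | zero => simp
    | tmul c d => simp
    | add y₁ y₂ h₁ h₂ => simp [tmul_add, h₁, h₂]
  | add x₁ x₂ h₁ h₂ => simp [add_tmul, h₁, h₂]

end collapse

/-- Acyclic case of edge-wise reduction of restrictions (the special case of two
edges sharing exactly one vertex): for concise edge states `φ₁, φ₂` (and nonzero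
target edge states), a restriction between the entanglement structures exists iff
edge-wise restrictions exist. -/
theorem restriction_two_edges_iff_edgewise
    {V₁ V₂ V₃ V₄ W₁ W₂ W₃ W₄ : Type*}
    [AddCommGroup V₁] [Module ℂ V₁] [AddCommGroup V₂] [Module ℂ V₂]
    [AddCommGroup V₃] [Module ℂ V₃] [AddCommGroup V₄] [Module ℂ V₄]
    [AddCommGroup W₁] [Module ℂ W₁] [AddCommGroup W₂] [Module ℂ W₂]
    [AddCommGroup W₃] [Module ℂ W₃] [AddCommGroup W₄] [Module ℂ W₄]
    (φ₁ : V₁ ⊗[ℂ] V₂) (φ₂ : V₃ ⊗[ℂ] V₄)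
    (ψ₁ : W₁ ⊗[ℂ] W₂) (ψ₂ : W₃ ⊗[ℂ] W₄)
    (hφ₁ : Concise φ₁) (hφ₂ : Concise φ₂)
    (hψ₁ : ψ₁ ≠ 0) (hψ₂ : ψ₂ ≠ 0) :
    (∃ (Mu : V₁ →ₗ[ℂ] W₁) (Mv : V₂ ⊗[ℂ] V₃ →ₗ[ℂ] W₂ ⊗[ℂ] W₃) (Mw : V₄ →ₗ[ℂ] W₄),
        TensorProduct.map Mu (TensorProduct.map Mv Mw)
            (vertexRegroup V₁ V₂ V₃ V₄ (φ₁ ⊗ₜ[ℂ] φ₂)) =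
          vertexRegroup W₁ W₂ W₃ W₄ (ψ₁ ⊗ₜ[ℂ] ψ₂)) ↔
    ((∃ (N₁ : V₁ →ₗ[ℂ] W₁) (N₂ : V₂ →ₗ[ℂ] W₂), TensorProduct.map N₁ N₂ φ₁ = ψ₁) ∧
      (∃ (N₃ : V₃ →ₗ[ℂ] W₃) (N₄ : V₄ →ₗ[ℂ] W₄), TensorProduct.map N₃ N₄ φ₂ = ψ₂)) := by
  constructor
  · rintro ⟨Mu, Mv, Mw, hM⟩
    constructor
    · obtain ⟨f₃, f₄, hc⟩ := exists_pair_ne_zero hψ₂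
      have h1 := congrArg (collapseR f₃ f₄) hM
      rw [collapseR_maps, collapseR_regroup] at h1
      refine ⟨Mu, (pairTensor f₃ f₄ ψ₂)⁻¹ •
        (ctrT f₃ ∘ₗ Mv ∘ₗ (TensorProduct.mk ℂ V₂ V₃).flip (ctrRight φ₂ (f₄ ∘ₗ Mw))), ?_⟩
      rw [TensorProduct.map_smul_right, LinearMap.smul_apply, h1, smul_smul,
        inv_mul_cancel₀ hc, one_smul]
    · obtain ⟨f₁, f₂, hc⟩ := exists_pair_ne_zero hψ₁
      have h1 := congrArg (collapseL f₁ f₂) hM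
      rw [collapseL_maps, collapseL_regroup] at h1
      refine ⟨(pairTensor f₁ f₂ ψ₁)⁻¹ •
        (ctrS f₂ ∘ₗ Mv ∘ₗ TensorProduct.mk ℂ V₂ V₃ (ctrLeft φ₁ (f₁ ∘ₗ Mu))), Mw, ?_⟩
      rw [TensorProduct.map_smul_left, LinearMap.smul_apply, h1, smul_smul,
        inv_mul_cancel₀ hc, one_smul]
  · rintro ⟨⟨N₁, N₂, h1⟩, ⟨N₃, N₄, h2⟩⟩
    exact ⟨N₁, TensorProduct.map N₂ N₃, N₄, by rw [regroup_natural, h1, h2]⟩
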